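/- Let I ⊆ ℝ be an open interval and let u : ℝ → ℝ be three times differentiable on I with u(x) ≠ 0, u′(x) ≠ 0, u′(x)² − 2·u(x)·u″(x) ≠ 0, and u‴(x)·(u′(x)² − 2·u(x)·u″(x))·u(x)² + 1 = 0 for all x ∈ I. Define m(x) := 1/u′(x) and y(x) := (1/2)·u′(x)² − u(x)·u″(x). Then m and y are differentiable on I and m′(x) = y′(x)·(2·y(x)²·m(x)² − y(x)) for all x ∈ I. (The reduction of equation (7.1) to the Riccati equation m₁ = 2y²m² − y of (7.12), pulled back along a solution via y = u₁²/2 − uu₂, m = 1/u₁, as in Remark after (7.11) of the paper.) -/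

import Mathlib

/-- Reduction of equation (7.1) to the Riccati equation (7.12),
pulled back along a solution via `y = u₁²/2 − u u₂`, `m = 1/u₁`. -/
theorem riccati_reduction_exampleII (a b : ℝ) (u : ℝ → ℝ)
    (hu1 : ∀ x ∈ Set.Ioo a b, DifferentiableAt ℝ u x)
    (hu2 : ∀ x ∈ Set.Ioo a b, DifferentiableAt ℝ (deriv u) x)
    (hu3 : ∀ x ∈ Set.Ioo a b, DifferentiableAt ℝ (deriv (deriv u)) x)
    (hu0 : ∀ x ∈ Set.Ioo a b, u x ≠ 0)
    (hu' : ∀ x ∈ Set.Ioo a b, deriv u x ≠ 0)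
    (hy0 : ∀ x ∈ Set.Ioo a b, (deriv u x) ^ 2 - 2 * u x * deriv (deriv u) x ≠ 0)
    (hode : ∀ x ∈ Set.Ioo a b,
      deriv (deriv (deriv u)) x * ((deriv u x) ^ 2 - 2 * u x * deriv (deriv u) x)
        * (u x) ^ 2 + 1 = 0) :
    (∀ x ∈ Set.Ioo a b, DifferentiableAt ℝ (fun x => 1 / deriv u x) x) ∧
    (∀ x ∈ Set.Ioo a b, DifferentiableAt ℝ
      (fun x => (1 / 2) * (deriv u x) ^ 2 - u x * deriv (deriv u) x) x) ∧
    (∀ x ∈ Set.Ioo a b,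
      deriv (fun x => 1 / deriv u x) x
        = deriv (fun x => (1 / 2) * (deriv u x) ^ 2 - u x * deriv (deriv u) x) x *
          (2 * ((1 / 2) * (deriv u x) ^ 2 - u x * deriv (deriv u) x) ^ 2 *
              (1 / deriv u x) ^ 2
            - ((1 / 2) * (deriv u x) ^ 2 - u x * deriv (deriv u) x))) := by
  have hmdiff : ∀ x ∈ Set.Ioo a b, DifferentiableAt ℝ (fun x => 1 / deriv u x) x := by
    intro x hx
    simp only [one_div]
    exact (hu2 x hx).inv (hu' x hx)
  have hydiff : ∀ x ∈ Set.Ioo a b, DifferentiableAt ℝ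
      (fun x => (1 / 2) * (deriv u x) ^ 2 - u x * deriv (deriv u) x) x := by
    intro x hx
    exact (((hu2 x hx).pow 2).const_mul _).sub ((hu1 x hx).mul (hu3 x hx))
  refine ⟨hmdiff, hydiff, ?_⟩
  intro x hx
  have hm : deriv (fun x => 1 / deriv u x) x
      = -(deriv (deriv u) x) / (deriv u x) ^ 2 := by
    simp only [one_div]
    exact deriv_inv'' (hu2 x hx) (hu' x hx)
  have hy : deriv (fun x => (1 / 2) * (deriv u x) ^ 2 - u x * deriv (deriv u) x) x
      = (1 / 2) * (2 * deriv u x * deriv (deriv u) x)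
        - (deriv u x * deriv (deriv u) x + u x * deriv (deriv (deriv u)) x) := by
    rw [deriv_fun_sub (f := fun y => (1 / 2) * (deriv u y) ^ 2) (g := fun y => u y * deriv (deriv u) y) (((hu2 x hx).pow 2).const_mul _) ((hu1 x hx).mul (hu3 x hx)),
      deriv_const_mul (d := fun y => (deriv u y) ^ 2) _ ((hu2 x hx).pow 2), deriv_fun_pow (hu2 x hx) 2,
      deriv_fun_mul (hu1 x hx) (hu3 x hx)]
    ring
  rw [hm, hy]
  have h0 := hu0 x hx
  have h1 := hu' x hx
  have h2 := hy0 x hx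
  have h3 := hode x hx
  have hd3 : deriv (deriv (deriv u)) x
      = -1 / (((deriv u x) ^ 2 - 2 * u x * deriv (deriv u) x) * (u x) ^ 2) := by
    rw [eq_div_iff (mul_ne_zero h2 (pow_ne_zero 2 h0))]
    linarith [h3]
  rw [hd3]
  have h2' : deriv u x ^ 2 - deriv (deriv u) x * 2 * u x ≠ 0 := fun h => h2 (by linarith)
  field_simp
  ring
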